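/- Let X be a real Banach space, Y a real normed space, D ⊆ X nonempty, F : D → Y a map, and R : X → ℝ. Let f† ∈ D and f* ∈ X* satisfy R(f) ≥ R(f†) + ⟨f*, f − f†⟩ for all f ∈ X, and write Δ(f) := R(f) − R(f†) − ⟨f*, f − f†⟩. Let r > 1, r' := r/(r−1), C_Δ > 0 and assume C_Δ ‖f − f†‖_X^r ≤ Δ(f) for all f ∈ D. Let t ≥ 1, let J be a nonempty index set, P_j : X* → X* maps for j ∈ J, κ, σ : J → (0,∞), and γ ≥ 0, such that for every j ∈ J: (a) ‖f* − P_j f*‖_{X*} ≤ κ(j), and (b) for every f ∈ D with ‖f† − f‖_X ≤ ((2/C_Δ)‖f*‖_{X*})^{r'/r} one has ⟨P_j f*, f† − f⟩ ≤ σ(j) ‖F(f†) − F(f)‖_Y + γ κ(j) ‖f† − f‖_X. Then for every f ∈ D, ⟨f*, f† − f⟩ ≤ (1/2) Δ(f) + ψ(‖F(f†) − F(f)‖_Y^t), where ψ(τ) := inf_{j∈J} [ σ(j) τ^{1/t} + (1/r') (2/C_Δ)^{r'/r} (1+γ)^{r'} κ(j)^{r'} ]. -/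

import Mathlib

set_option maxHeartbeats 1000000


/-- Theorem 3.1: abstract strategy for the verification of variational source conditions in
Banach spaces. Under the lower Bregman-distance bound, the subgradient smoothness condition (a)
and the ill-posedness condition (b), the variational source condition holds with the index
function `ψ(τ) = inf_j [σ(j) τ^{1/t} + (1/r') (2/C_Δ)^{r'/r} (1+γ)^{r'} κ(j)^{r'}]`, where
`r' = r/(r−1)` and `Δ(f) = R(f) − R(f†) − ⟨f*, f − f†⟩`. -/
theorem stmt_6
    {X Y : Type*} [NormedAddCommGroup X] [NormedSpace ℝ X] [CompleteSpace X]
    [NormedAddCommGroup Y] [NormedSpace ℝ Y]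
    (D : Set X) (hD : D.Nonempty) (F : X → Y) (R : X → ℝ)
    (fdag : X) (hfdag : fdag ∈ D) (fstar : X →L[ℝ] ℝ)
    (hsubgrad : ∀ f : X, R fdag + fstar (f - fdag) ≤ R f)
    (r : ℝ) (hr : 1 < r) (CΔ : ℝ) (hCΔ : 0 < CΔ)
    (hbreg : ∀ f ∈ D, CΔ * ‖f - fdag‖ ^ r ≤ R f - R fdag - fstar (f - fdag))
    (t : ℝ) (ht : 1 ≤ t)
    {J : Type*} [Nonempty J] (P : J → (X →L[ℝ] ℝ) → (X →L[ℝ] ℝ))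
    (κ σ : J → ℝ) (hκ : ∀ j, 0 < κ j) (hσ : ∀ j, 0 < σ j) (γ : ℝ) (hγ : 0 ≤ γ)
    (ha : ∀ j, ‖fstar - P j fstar‖ ≤ κ j)
    (hb : ∀ j, ∀ f ∈ D,
      ‖fdag - f‖ ≤ ((2 / CΔ) * ‖fstar‖) ^ ((r / (r - 1)) / r) →
      (P j fstar) (fdag - f) ≤ σ j * ‖F fdag - F f‖ + γ * κ j * ‖fdag - f‖) :
    ∀ f ∈ D, fstar (fdag - f) ≤
      (1 / 2) * (R f - R fdag - fstar (f - fdag)) +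
        ⨅ j : J, (σ j * (‖F fdag - F f‖ ^ t) ^ (1 / t) +
          (1 / (r / (r - 1))) * (2 / CΔ) ^ ((r / (r - 1)) / r) *
            (1 + γ) ^ (r / (r - 1)) * κ j ^ (r / (r - 1))) := by
  intro f hf
  have hr1 : (0:ℝ) < r - 1 := by linarith
  have hr0 : (0:ℝ) < r := by linarith
  set r' : ℝ := r / (r - 1) with hr'def
  have hr'pos : 0 < r' := by positivity
  have hconj : r.HolderConjugate r' := Real.HolderConjugate.conjExponent hr
  set n := ‖fdag - f‖ with hn
  have hn0 : 0 ≤ n := norm_nonneg _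
  set dF := ‖F fdag - F f‖ with hdF
  have hdF0 : 0 ≤ dF := norm_nonneg _
  set Δ := R f - R fdag - fstar (f - fdag) with hΔdef
  have hnn : ‖f - fdag‖ = n := by rw [hn, norm_sub_rev]
  have hΔ : CΔ * n ^ r ≤ Δ := by rw [← hnn]; exact hbreg f hf
  have hΔ0 : 0 ≤ Δ := le_trans (by positivity) hΔ
  have htpow : (dF ^ t) ^ (1/t) = dF := by
    rw [← Real.rpow_mul hdF0, mul_one_div, div_self (by positivity), Real.rpow_one]
  have key : ∀ j, fstar (fdag - f) - (1/2) * Δ ≤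
      σ j * dF + (1/r') * (2/CΔ) ^ (r'/r) * (1+γ) ^ r' * κ j ^ r' := by
    intro j
    have hterm0 : 0 ≤ (1/r') * (2/CΔ) ^ (r'/r) * (1+γ) ^ r' * κ j ^ r' := by
      have h1 := Real.rpow_nonneg (by linarith : (0:ℝ) ≤ 1 + γ) r'
      have h2 := Real.rpow_nonneg (hκ j).le r'
      have h3 := Real.rpow_nonneg (by positivity : (0:ℝ) ≤ 2/CΔ) (r'/r)
      positivity
    rcases le_or_gt n (((2/CΔ) * ‖fstar‖) ^ (r'/r)) with hle | hlt
    · -- small-norm case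
      have hPb := hb j f hf hle
      have hA : fstar (fdag - f) - (P j fstar) (fdag - f) ≤ κ j * n := by
        have h1 : (fstar - P j fstar) (fdag - f) ≤ ‖fstar - P j fstar‖ * n := by
          calc (fstar - P j fstar) (fdag - f) ≤ ‖(fstar - P j fstar) (fdag - f)‖ :=
                le_abs_self _
            _ ≤ ‖fstar - P j fstar‖ * ‖fdag - f‖ := ContinuousLinearMap.le_opNorm _ _
        have h2 : ‖fstar - P j fstar‖ * n ≤ κ j * n :=
          mul_le_mul_of_nonneg_right (ha j) hn0
        simp only [ContinuousLinearMap.sub_apply] at h1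
        linarith
      have hstep : fstar (fdag - f) ≤ σ j * dF + (1+γ) * κ j * n := by
        have := (hκ j).le
        nlinarith
      -- Young's inequality
      set c : ℝ := (CΔ * r / 2) ^ (1/r) with hc
      have hcb : (0:ℝ) < CΔ * r / 2 := by positivity
      have hc0 : 0 < c := Real.rpow_pos_of_pos hcb _
      have h1γ : (0:ℝ) ≤ 1 + γ := by linarith
      have hy := Real.young_inequality_of_nonneg (mul_nonneg hc0.le hn0)
        (div_nonneg (mul_nonneg h1γ (hκ j).le) hc0.le) hconj
      have hlhs : (c * n) * ((1+γ) * κ j / c) = (1+γ) * κ j * n := by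
        field_simp
      have hcr : c ^ r = CΔ * r / 2 := by
        rw [hc, ← Real.rpow_mul hcb.le, one_div, inv_mul_cancel₀ (ne_of_gt hr0),
          Real.rpow_one]
      have hcn : (c * n) ^ r / r = (CΔ/2) * n ^ r := by
        rw [Real.mul_rpow hc0.le hn0, hcr]
        field_simp
      have hcr' : c ^ r' = (CΔ * r / 2) ^ (r'/r) := by
        rw [hc, ← Real.rpow_mul hcb.le, one_div, inv_mul_eq_div]
      have hbr' : ((1+γ) * κ j / c) ^ r' = ((1+γ) ^ r' * κ j ^ r') / (CΔ * r / 2) ^ (r'/r) := by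
        rw [Real.div_rpow (mul_nonneg h1γ (hκ j).le) hc0.le, hcr',
          Real.mul_rpow h1γ (hκ j).le]
      have hinv : (1:ℝ) / (CΔ * r / 2) ^ (r'/r) ≤ (2/CΔ) ^ (r'/r) := by
        rw [one_div, ← Real.inv_rpow hcb.le]
        apply Real.rpow_le_rpow (by positivity) _ (by positivity)
        rw [inv_div]
        rw [div_le_div_iff₀ (by positivity) (by positivity)]
        nlinarith
      have hyoung : (1+γ) * κ j * n ≤ (CΔ/2) * n ^ r +
          (1/r') * (2/CΔ) ^ (r'/r) * (1+γ) ^ r' * κ j ^ r' := by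
        have h3 : ((1+γ) * κ j / c) ^ r' / r' ≤
            (1/r') * (2/CΔ) ^ (r'/r) * (1+γ) ^ r' * κ j ^ r' := by
          rw [hbr']
          have hnum : (0:ℝ) ≤ (1+γ) ^ r' * κ j ^ r' :=
            mul_nonneg (Real.rpow_nonneg h1γ _) (Real.rpow_nonneg (hκ j).le _)
          have h4 : ((1+γ) ^ r' * κ j ^ r') / (CΔ * r / 2) ^ (r'/r) ≤
              ((1+γ) ^ r' * κ j ^ r') * (2/CΔ) ^ (r'/r) := by
            rw [div_eq_mul_one_div]
            exact mul_le_mul_of_nonneg_left hinv hnum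
          calc ((1+γ) ^ r' * κ j ^ r') / (CΔ * r / 2) ^ (r'/r) / r'
              ≤ ((1+γ) ^ r' * κ j ^ r') * (2/CΔ) ^ (r'/r) / r' := by
                gcongr
            _ = (1/r') * (2/CΔ) ^ (r'/r) * (1+γ) ^ r' * κ j ^ r' := by ring
        rw [hlhs, hcn] at hy
        linarith
      have hhalf : (CΔ/2) * n ^ r ≤ (1/2) * Δ := by linarith
      linarith
    · -- large-norm case
      have hρ0 : (0:ℝ) ≤ ((2/CΔ) * ‖fstar‖) ^ (r'/r) :=
        Real.rpow_nonneg (by positivity) _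
      have hnpos : 0 < n := lt_of_le_of_lt hρ0 hlt
      have h1 : (2/CΔ) * ‖fstar‖ ≤ n ^ (r - 1) := by
        have h2 := Real.rpow_le_rpow hρ0 hlt.le hr1.le
        rw [← Real.rpow_mul (by positivity)] at h2
        have hexp : r'/r * (r - 1) = 1 := by
          rw [hr'def]; field_simp
        rwa [hexp, Real.rpow_one] at h2
      have h3 : fstar (fdag - f) ≤ ‖fstar‖ * n := by
        calc fstar (fdag - f) ≤ ‖fstar (fdag - f)‖ := le_abs_self _
          _ ≤ ‖fstar‖ * ‖fdag - f‖ := ContinuousLinearMap.le_opNorm _ _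
      have h4 : ‖fstar‖ * n ≤ (CΔ/2) * (n ^ (r-1) * n) := by
        have h4' := mul_le_mul_of_nonneg_right h1 hn0
        calc ‖fstar‖ * n = (CΔ/2) * ((2/CΔ) * ‖fstar‖ * n) := by
              field_simp
            _ ≤ (CΔ/2) * (n ^ (r-1) * n) :=
              mul_le_mul_of_nonneg_left h4' (by positivity)
      have h5 : n ^ (r-1) * n = n ^ r := by
        rw [← Real.rpow_add_one hnpos.ne']
        congr 1
        ring
      have hhalf : (CΔ/2) * n ^ r ≤ (1/2) * Δ := by linarith
      rw [h5] at h4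
      linarith [mul_nonneg (hσ j).le hdF0]
  have hinf : fstar (fdag - f) - (1/2) * Δ ≤
      ⨅ j : J, (σ j * (dF ^ t) ^ (1/t) +
        (1/r') * (2/CΔ) ^ (r'/r) * (1+γ) ^ r' * κ j ^ r') := by
    apply le_ciInf
    intro j
    rw [htpow]
    exact key j
  linarith
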